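/- In the setting of the previous min-max bound, if additionally λ_k = Λ and the numbers b(ψ_i,ψ_i)/∥ψ_i∥² are all ≤ Λ, then any linear combination ψ = c₁ψ₁ + ... + c_kψ_k with all c_i ≠ 0 that is orthogonal in H to φ₁, ..., φ_{k−1} and achieves b(ψ,ψ)/∥ψ∥² = λ_k is an eigenvector of the operator generated by b with eigenvalue λ_k. -/

import Mathlib

open scoped RealInnerProductSpace

variable {H : Type*} [NormedAddCommGroup H] [InnerProductSpace ℝ H] [CompleteSpace H]

/-- The squared form norm `‖u‖_b² = b(u,u) + ‖u‖²` on the domain `W` of a bilinear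
form `b`. -/
def formNormSq (W : Submodule ℝ H) (b : W →ₗ[ℝ] W →ₗ[ℝ] ℝ) (u : W) : ℝ :=
  b u u + ‖(u : H)‖ ^ 2

/-- The form `b` with domain `W` is *closed*: `W` is complete in the form norm. -/
def IsClosedForm (W : Submodule ℝ H) (b : W →ₗ[ℝ] W →ₗ[ℝ] ℝ) : Prop :=
  ∀ u : ℕ → W,
    (∀ ε > (0 : ℝ), ∃ N, ∀ m ≥ N, ∀ n ≥ N, formNormSq W b (u m - u n) < ε) →
    ∃ v : W, Filter.Tendsto (fun n => formNormSq W b (u n - v)) Filter.atTop (nhds 0)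

/-- The inclusion `(W, ‖·‖_b) → H` is compact: every sequence bounded in the form norm
has a subsequence converging in `H`. -/
def IsCompactlyEmbedded (W : Submodule ℝ H) (b : W →ₗ[ℝ] W →ₗ[ℝ] ℝ) : Prop :=
  ∀ u : ℕ → W, (∃ C : ℝ, ∀ n, formNormSq W b (u n) ≤ C) →
    ∃ (v : H) (s : ℕ → ℕ), StrictMono s ∧
      Filter.Tendsto (fun n => ((u (s n) : H))) Filter.atTop (nhds v)

/-- The `μ`-eigenspace of the self-adjoint operator generated by the form `b` with
domain `W`, described weakly: `u ∈ W` with `b(u,v) = μ⟪u,v⟫` for all `v ∈ W`. -/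
def weakEigenspace (W : Submodule ℝ H) (b : W →ₗ[ℝ] W →ₗ[ℝ] ℝ) (μ : ℝ) :
    Submodule ℝ W where
  carrier := {u | ∀ v : W, b u v = μ * ⟪(u : H), (v : H)⟫}
  add_mem' := by
    intro x y hx hy v
    simp only [map_add, LinearMap.add_apply, hx v, hy v, Submodule.coe_add,
      inner_add_left]
    ring
  zero_mem' := by
    intro v
    simp
  smul_mem' := by
    intro c x hx v
    simp only [map_smul, LinearMap.smul_apply, hx v, Submodule.coe_smul,
      real_inner_smul_left, smul_eq_mul]
    ring

/-- Auxiliary: Bessel-type inequality giving the min-max lower bound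
`lam k * ‖u‖² ≤ b u u` for `u ⊥ φ₀, …, φ_{k-1}`. -/
lemma aux_key_ineq
    (W : Submodule ℝ H) (b : W →ₗ[ℝ] W →ₗ[ℝ] ℝ)
    (hsymm : ∀ u v : W, b u v = b v u) (hnonneg : ∀ u : W, 0 ≤ b u u)
    (lam : ℕ → ℝ) (hmono : Monotone lam)
    (φ : ℕ → W) (horth : Orthonormal ℝ fun n => ((φ n : H)))
    (heig : ∀ (n : ℕ) (v : W), b (φ n) v = lam n * ⟪((φ n : H)), (v : H)⟫)
    (hcomplete : ∀ x : H, (∀ n, ⟪((φ n : H)), x⟫ = 0) → x = 0)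
    (k : ℕ) (u : W) (hu : ∀ m < k, ⟪((φ m : H)), (u : H)⟫ = 0) :
    lam k * ‖(u : H)‖ ^ 2 ≤ b u u := by
  set a : ℕ → ℝ := fun n => ⟪((φ n : H)), (u : H)⟫ with ha
  have hinner : ∀ n m : ℕ, ⟪((φ n : H)), ((φ m : H))⟫ = if n = m then (1:ℝ) else 0 :=
    fun n m => orthonormal_iff_ite.mp horth n m
  -- eigenvalues are nonnegative
  have hb_phi : ∀ n m : ℕ, b (φ n) (φ m) = if n = m then lam n else 0 := by
    intro n m
    rw [heig n (φ m), hinner n m]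
    by_cases h : n = m
    · simp [h]
    · simp [h]
  have hlam_nonneg : ∀ n, 0 ≤ lam n := by
    intro n
    have h1 := hb_phi n n
    rw [if_pos rfl] at h1
    have := hnonneg (φ n)
    linarith
  -- finite-sum inequality
  have hfin : ∀ s : Finset ℕ, ∑ n ∈ s, lam n * a n ^ 2 ≤ b u u := by
    intro s
    have hbyu : b (∑ n ∈ s, a n • φ n) u = ∑ n ∈ s, lam n * a n ^ 2 := by
      rw [map_sum]
      simp only [LinearMap.coe_sum, Finset.sum_apply, map_smul, LinearMap.smul_apply,
        smul_eq_mul]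
      refine Finset.sum_congr rfl fun n _ => ?_
      rw [heig n u]; ring
    have hbuy : b u (∑ n ∈ s, a n • φ n) = ∑ n ∈ s, lam n * a n ^ 2 := by
      rw [hsymm u _, hbyu]
    have hbyy : b (∑ n ∈ s, a n • φ n) (∑ n ∈ s, a n • φ n)
        = ∑ n ∈ s, lam n * a n ^ 2 := by
      rw [map_sum]
      simp only [LinearMap.coe_sum, Finset.sum_apply, map_smul, LinearMap.smul_apply,
        smul_eq_mul, map_sum]
      refine Finset.sum_congr rfl fun n hn => ?_
      have hterm : ∀ m ∈ s, a n * (a m * b (φ m) (φ n))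
          = if n = m then lam n * a n ^ 2 else 0 := by
        intro m _
        rw [hb_phi m n]
        by_cases h : n = m
        · subst h; rw [if_pos rfl, if_pos rfl]; ring
        · rw [if_neg (fun he => h he.symm), if_neg h]; ring
      rw [Finset.mul_sum, Finset.sum_congr rfl hterm,
        Finset.sum_ite_eq s n (fun _ => lam n * a n ^ 2), if_pos hn]
    have h0 := hnonneg (u - ∑ n ∈ s, a n • φ n)
    have hexp : b (u - ∑ n ∈ s, a n • φ n) (u - ∑ n ∈ s, a n • φ n)
        = b u u - b u (∑ n ∈ s, a n • φ n) - b (∑ n ∈ s, a n • φ n) u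
          + b (∑ n ∈ s, a n • φ n) (∑ n ∈ s, a n • φ n) := by
      simp only [map_sub, LinearMap.sub_apply]
      ring
    rw [hexp, hbuy, hbyu, hbyy] at h0
    linarith
  -- termwise comparison
  have hterm : ∀ n, lam k * a n ^ 2 ≤ lam n * a n ^ 2 := by
    intro n
    by_cases h : n < k
    · have : a n = 0 := hu n h
      simp [this]
    · have : lam k ≤ lam n := hmono (le_of_not_gt h)
      nlinarith [sq_nonneg (a n)]
  have hfin' : ∀ s : Finset ℕ, ∑ n ∈ s, lam k * a n ^ 2 ≤ b u u := fun s =>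
    le_trans (Finset.sum_le_sum fun n _ => hterm n) (hfin s)
  -- Parseval
  have hsp : (Submodule.span ℝ (Set.range fun n => ((φ n : H))))ᗮ = ⊥ := by
    rw [Submodule.eq_bot_iff]
    intro x hx
    refine hcomplete x fun n => ?_
    exact hx ((φ n : H)) (Submodule.subset_span ⟨n, rfl⟩)
  set B := HilbertBasis.mkOfOrthogonalEqBot horth hsp with hB
  have hBcoe : ⇑B = fun n => ((φ n : H)) := HilbertBasis.coe_mkOfOrthogonalEqBot horth hsp
  have hsum : HasSum (fun n => a n ^ 2) (‖(u : H)‖ ^ 2) := by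
    have := B.hasSum_inner_mul_inner (u : H) (u : H)
    rw [hBcoe] at this
    simp only [RCLike.inner_apply] at this
    have hfun : (fun n => a n ^ 2) = fun i => ⟪(u : H), (φ i : H)⟫ * ⟪(φ i : H), (u : H)⟫ := by
      funext n
      simp only [ha, sq, real_inner_comm (φ n : H) (u : H)]
    rw [hfun, ← real_inner_self_eq_norm_sq]
    exact this
  have hsum' : HasSum (fun n => lam k * a n ^ 2) (lam k * ‖(u : H)‖ ^ 2) := hsum.mul_left _
  exact le_of_tendsto' hsum' hfin'

/-- equality case in the min-max bound.  In the setting of the previous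
statement, if moreover `λ_k = Λ`, the Rayleigh quotients `b(ψᵢ,ψᵢ)/‖ψᵢ‖²` are all `≤ Λ`,
and `ψ = c₁ψ₁ + ⋯ + c_kψ_k` (all `cᵢ ≠ 0`) is orthogonal in `H` to `φ₁, …, φ_{k−1}` and
achieves `b(ψ,ψ)/‖ψ‖² = λ_k`, then `ψ` is an eigenvector of the operator generated by
`b` with eigenvalue `λ_k` (expressed weakly: `b(ψ, v) = λ_k ⟪ψ, v⟫` for all `v ∈ W`). -/
theorem minmax_equality_case
    (W : Submodule ℝ H) (b : W →ₗ[ℝ] W →ₗ[ℝ] ℝ)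
    (hdense : Dense (W : Set H))
    (hsymm : ∀ u v : W, b u v = b v u) (hnonneg : ∀ u : W, 0 ≤ b u u)
    (hclosed : IsClosedForm W b) (hcompact : IsCompactlyEmbedded W b)
    (lam : ℕ → ℝ) (hmono : Monotone lam)
    (φ : ℕ → W) (horth : Orthonormal ℝ fun n => ((φ n : H)))
    (heig : ∀ (n : ℕ) (v : W), b (φ n) v = lam n * ⟪((φ n : H)), (v : H)⟫)
    (hcomplete : ∀ x : H, (∀ n, ⟪((φ n : H)), x⟫ = 0) → x = 0)
    (k : ℕ) (hk : 1 ≤ k) (Λ : ℝ) (ψ : Fin k → W)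
    (hne : ∀ i, (ψ i : H) ≠ 0)
    (horthH : ∀ i j, i ≠ j → ⟪((ψ i : H)), ((ψ j : H))⟫ = 0)
    (horthb : ∀ i j, i ≠ j → b (ψ i) (ψ j) = 0)
    (hray : ∀ i, b (ψ i) (ψ i) ≤ Λ * ‖(ψ i : H)‖ ^ 2)
    (heqΛ : lam (k - 1) = Λ)
    (c : Fin k → ℝ) (hc : ∀ i, c i ≠ 0)
    (ψs : W) (hψs : ψs = ∑ i, c i • ψ i)
    (hψs_ne : (ψs : H) ≠ 0)
    (horthφ : ∀ m < k - 1, ⟪((φ m : H)), (ψs : H)⟫ = 0)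
    (hach : b ψs ψs = lam (k - 1) * ‖(ψs : H)‖ ^ 2) :
    ∀ v : W, b ψs v = lam (k - 1) * ⟪(ψs : H), (v : H)⟫ := by
  have key := aux_key_ineq W b hsymm hnonneg lam hmono φ horth heig hcomplete (k - 1)
  -- Step 1: for any `w` orthogonal to `φ₀, …, φ_{k-2}`, the first variation vanishes.
  have hvar : ∀ w : W, (∀ m < k - 1, ⟪((φ m : H)), (w : H)⟫ = 0) →
      b ψs w = lam (k - 1) * ⟪(ψs : H), (w : H)⟫ := by
    intro w hw
    set Λ' : ℝ := lam (k - 1) with hΛ'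
    set L : ℝ := b ψs w - Λ' * ⟪(ψs : H), (w : H)⟫ with hL
    set M : ℝ := b w w - Λ' * ‖(w : H)‖ ^ 2 with hM
    have hq : ∀ t : ℝ, 0 ≤ 2 * t * L + t ^ 2 * M := by
      intro t
      have horthsum : ∀ m < k - 1, ⟪((φ m : H)), ((ψs + t • w : W) : H)⟫ = 0 := by
        intro m hm
        rw [Submodule.coe_add, Submodule.coe_smul, inner_add_right,
          real_inner_smul_right, horthφ m hm, hw m hm]
        ring
      have hkey := key (ψs + t • w) horthsum
      have hbexp : b (ψs + t • w) (ψs + t • w)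
          = b ψs ψs + 2 * t * b ψs w + t ^ 2 * b w w := by
        simp only [map_add, map_smul, LinearMap.add_apply, LinearMap.smul_apply,
          smul_eq_mul]
        rw [hsymm w ψs]; ring
      have hnexp : ‖((ψs + t • w : W) : H)‖ ^ 2
          = ‖(ψs : H)‖ ^ 2 + 2 * t * ⟪(ψs : H), (w : H)⟫ + t ^ 2 * ‖(w : H)‖ ^ 2 := by
        rw [Submodule.coe_add, Submodule.coe_smul]
        rw [← real_inner_self_eq_norm_sq, inner_add_add_self,
          real_inner_smul_left, real_inner_smul_right, real_inner_smul_left,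
          real_inner_smul_right, ← real_inner_self_eq_norm_sq,
          ← real_inner_self_eq_norm_sq, real_inner_comm ((w : H)) ((ψs : H))]
        ring
      rw [hbexp, hnexp] at hkey
      have hach' : b ψs ψs = Λ' * ‖(ψs : H)‖ ^ 2 := hach
      rw [hL, hM]
      nlinarith [hkey]
    -- a nonnegative quadratic with zero constant term has zero linear coefficient
    have hL0 : L = 0 := by
      by_contra hLne
      have hL2 : 0 < L ^ 2 := by positivity
      set ε : ℝ := 1 / (|M| + 1) with hε
      have hεpos : 0 < ε := by positivity
      have hεM : ε * |M| < 1 := by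
        rw [hε, div_mul_eq_mul_div, one_mul, div_lt_one (by positivity)]
        linarith [abs_nonneg M]
      have h1 := hq (-(L * ε))
      have habs : (L * ε) ^ 2 * M ≤ (L * ε) ^ 2 * |M| := by
        nlinarith [sq_nonneg (L * ε), le_abs_self M]
      nlinarith [mul_pos hL2 hεpos, mul_pos (mul_pos hL2 hεpos) hεpos]
    have : b ψs w - lam (k - 1) * ⟪(ψs : H), (w : H)⟫ = 0 := hL0
    linarith
  -- Step 2: general `v` decomposes as `w + proj`.
  intro v
  set proj : W := ∑ m ∈ Finset.range (k - 1), ⟪((φ m : H)), (v : H)⟫ • φ m with hproj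
  set w : W := v - proj with hwdef
  have hinner : ∀ n m : ℕ, ⟪((φ n : H)), ((φ m : H))⟫ = if n = m then (1:ℝ) else 0 :=
    fun n m => orthonormal_iff_ite.mp horth n m
  have hworth : ∀ m < k - 1, ⟪((φ m : H)), (w : H)⟫ = 0 := by
    intro m hm
    rw [hwdef, Submodule.coe_sub, inner_sub_right, hproj]
    have hcoe : ((∑ n ∈ Finset.range (k - 1), ⟪((φ n : H)), (v : H)⟫ • φ n : W) : H)
        = ∑ n ∈ Finset.range (k - 1), ⟪((φ n : H)), (v : H)⟫ • ((φ n : H)) := by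
      push_cast
      rfl
    rw [hcoe, inner_sum]
    have : ∀ n ∈ Finset.range (k - 1),
        ⟪((φ m : H)), ⟪((φ n : H)), (v : H)⟫ • ((φ n : H))⟫
          = if m = n then ⟪((φ m : H)), (v : H)⟫ else 0 := by
      intro n _
      rw [real_inner_smul_right, hinner m n]
      by_cases h : m = n
      · subst h; simp
      · simp [h]
    rw [Finset.sum_congr rfl this, Finset.sum_ite_eq (Finset.range (k - 1)) m
      (fun _ => ⟪((φ m : H)), (v : H)⟫), if_pos (Finset.mem_range.mpr hm)]
    ring
  have hbproj : b ψs proj = 0 := by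
    rw [hproj, map_sum]
    refine Finset.sum_eq_zero fun m hm => ?_
    have hm' : m < k - 1 := Finset.mem_range.mp hm
    rw [map_smul, smul_eq_mul, hsymm ψs (φ m), heig m ψs, horthφ m hm']
    ring
  have hiproj : ⟪(ψs : H), ((proj : W) : H)⟫ = 0 := by
    rw [hproj]
    have hcoe : ((∑ n ∈ Finset.range (k - 1), ⟪((φ n : H)), (v : H)⟫ • φ n : W) : H)
        = ∑ n ∈ Finset.range (k - 1), ⟪((φ n : H)), (v : H)⟫ • ((φ n : H)) := by
      push_cast
      rfl
    rw [hcoe, inner_sum]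
    refine Finset.sum_eq_zero fun m hm => ?_
    have hm' : m < k - 1 := Finset.mem_range.mp hm
    have h0 : ⟪(ψs : H), ((φ m : H))⟫ = 0 := by
      rw [real_inner_comm]; exact horthφ m hm'
    rw [real_inner_smul_right, h0, mul_zero]
  have hvw := hvar w hworth
  have hsplit : v = w + proj := by rw [hwdef]; abel
  calc b ψs v = b ψs w + b ψs proj := by rw [hsplit, map_add]
    _ = lam (k - 1) * ⟪(ψs : H), (w : H)⟫ + 0 := by rw [hvw, hbproj]
    _ = lam (k - 1) * ⟪(ψs : H), (v : H)⟫ := by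
        rw [hsplit, Submodule.coe_add, inner_add_right, hiproj]
        ring
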